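/- arXiv:0811.1103 — 2 statements merged into one kernel-verified Lean document; each statement's English description precedes it below -/
import Mathlib

section
/- Completeness of the saturation sequence: for every configuration ⟨p^j, γ⟩ ∈ Pre*(C_Init) there exists some i such that γ ∈ L(A_i^{q^j}). -/
namespace Order2

/-! Order-2 APDSs, 2-store multi-automata (in pooled form) and the
backwards-reachability saturation construction of Hague–Ong. -/

/-- 1-stores -/
abbrev Store1 (α : Type) := List α

/-- 2-stores: the topmost 1-store together with the rest (hence nonempty) -/
abbrev Store2 (α : Type) := List α × List (List α)

/-- the operations of `O_2` -/
inductive Op2 (α : Type) where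
  | pushw : List α → Op2 α
  | push2 : Op2 α
  | pop2 : Op2 α

/-- partial application of an operation to a 2-store -/
def Op2.apply {α : Type} : Op2 α → Store2 α → Option (Store2 α)
  | .pushw w, s =>
      match s.1 with
      | [] => none
      | _ :: t => some (w ++ t, s.2)
  | .push2, s => some (s.1, s.1 :: s.2)
  | .pop2, s =>
      match s.2 with
      | [] => none
      | r :: rs => some (r, rs)

def top1 {α : Type} (s : Store2 α) : Option α := s.1.head?

/-- configurations; `none` is the undefined store `∇` -/
abbrev Conf (P α : Type) := P × Option (Store2 α)

/-- commands of an order-2 APDS -/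
abbrev Cmds (P α : Type) := Set (P × α × Set (Op2 α × P))

/-- `⟨p,γ⟩ ↪ C` -/
def ConfStep {P α : Type} (D : Cmds P α) (c : Conf P α) (C : Set (Conf P α)) : Prop :=
  ∃ p γ a OP, c = (p, some γ) ∧ (p, a, OP) ∈ D ∧ top1 γ = some a ∧
    C = {c' | ∃ o p' δ, (o, p') ∈ OP ∧ Op2.apply o γ = some δ ∧ c' = (p', some δ)}
      ∪ {c' | (∃ o p', (o, p') ∈ OP ∧ Op2.apply o γ = none) ∧ c' = (p, none)}

/-- `↪` extended to sets of configurations -/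
def SetStep {P α : Type} (D : Cmds P α) (X Y : Set (Conf P α)) : Prop :=
  ∃ c C C', ConfStep D c C ∧ c ∉ C' ∧ X = insert c C' ∧ Y = C' ∪ C

/-- `Pre*(C_Init)` -/
def PreStar {P α : Type} (D : Cmds P α) (CI : Set (Conf P α)) : Set (Conf P α) :=
  {c | ∃ C, Relation.ReflTransGen (SetStep D) {c} C ∧ C ⊆ CI}

/-- identifiers `G̃_{(q₁,Q₂)}` of the new order-2 transitions -/
abbrev Ident (Q : Type) := Q × Set Q

/-- the pool of order-1 states: the states `σB` of the disjoint union of the automata of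
`B` (the 1-store automata of `A_0` together with the `B^a_1`), plus one state
`g^i_{(q₁,Q₂)}` for every stage `i` and identifier -/
abbrev GQ (σB Q : Type) := σB ⊕ (ℕ × Ident Q)

/-- the elements `α_t` of the element sets: a reference `θ` to an automaton of
`B ∪ G̃^{i-1}` (given by its initial state in the pool), or a triple `(a, push_w, θ)` -/
inductive Elem (α σB Q : Type) where
  | ref : GQ σB Q → Elem α σB Q
  | push : α → List α → GQ σB Q → Elem α σB Q

/-- order-1 (pool) transition relations -/
abbrev Trans1 (α σB Q : Type) := Set (GQ σB Q × α × Set (GQ σB Q))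
/-- order-2 transition relations (labels are initial states in the pool) -/
abbrev Trans2 (α σB Q : Type) := Set (Q × GQ σB Q × Set Q)

/-- one alternating step of the order-1 (pool) automaton -/
def wstep {α σB Q : Type} (Δ : Trans1 α σB Q) (a : α) (S S' : Set (GQ σB Q)) : Prop :=
  ∃ f : GQ σB Q → Set (GQ σB Q),
    (∀ g ∈ S, (g, a, f g) ∈ Δ) ∧ S' = ⋃ g ∈ S, f g

/-- alternating run of the order-1 automaton over a 1-store -/
inductive wrun {α σB Q : Type} (Δ : Trans1 α σB Q) :
    Store1 α → Set (GQ σB Q) → Set (GQ σB Q) → Prop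
  | nil (S : Set (GQ σB Q)) : wrun Δ [] S S
  | cons {a : α} {w : Store1 α} {S S1 S2 : Set (GQ σB Q)} :
      wstep Δ a S S1 → wrun Δ w S1 S2 → wrun Δ (a :: w) S S2

/-- acceptance of a 1-store from the pool state `g`, w.r.t. final states `F` -/
def Acc1 {α σB Q : Type} (Δ : Trans1 α σB Q) (F : Set (GQ σB Q)) (g : GQ σB Q)
    (w : Store1 α) : Prop :=
  ∃ S, wrun Δ w {g} S ∧ S ⊆ F

/-- one alternating order-2 step reading the 1-store `γ` (each label must accept `γ`) -/
def step2 {α σB Q : Type} (Δ1 : Trans1 α σB Q) (F1 : Set (GQ σB Q)) (Δ2 : Trans2 α σB Q)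
    (γ : Store1 α) (S S' : Set Q) : Prop :=
  ∃ f : Q → GQ σB Q × Set Q,
    (∀ q ∈ S, (q, f q) ∈ Δ2 ∧ Acc1 Δ1 F1 (f q).1 γ) ∧ S' = ⋃ q ∈ S, (f q).2

/-- alternating order-2 run over a word of 1-stores -/
inductive run2 {α σB Q : Type} (Δ1 : Trans1 α σB Q) (F1 : Set (GQ σB Q))
    (Δ2 : Trans2 α σB Q) : List (Store1 α) → Set Q → Set Q → Prop
  | nil (S : Set Q) : run2 Δ1 F1 Δ2 [] S S
  | cons {γ : Store1 α} {w : List (Store1 α)} {S S1 S2 : Set Q} :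
      step2 Δ1 F1 Δ2 γ S S1 → run2 Δ1 F1 Δ2 w S1 S2 → run2 Δ1 F1 Δ2 (γ :: w) S S2

/-- one order-2 step recording only the set `θ̃` of labels used -/
def lstep {α σB Q : Type} (Δ2 : Trans2 α σB Q) (S : Set Q) (θ : Set (GQ σB Q))
    (S' : Set Q) : Prop :=
  ∃ f : Q → GQ σB Q × Set Q,
    (∀ q ∈ S, (q, f q) ∈ Δ2) ∧ θ = (fun q => (f q).1) '' S ∧ S' = ⋃ q ∈ S, (f q).2

/-- The fixed data of the construction: an order-2 APDS `D` over control states `P`, and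
the 2-store multi-automaton `A_0` presented in pooled form:  order-2 states `Q` with
initial states `qinit p`, final states `F2`, the distinguished states `q*_f` (`qfstar`)
and `q^ε_f` (`qfeps`), `∇`-transitions `nabla`;  order-2 transitions `Δ2B` labelled by
(the initial states of) 1-store automata whose disjoint union (together with the `B^a_1`,
with initial states `ba a`) is the order-1 automaton `G^0 = (Δ1B, F1B)` over states `σB`. -/
structure Setup (α P Q σB : Type) where
  D : Cmds P α
  qinit : P → Q
  F2 : Set Q
  qfstar : Q
  qfeps : Q
  nabla : Set Q
  Δ2B : Set (Q × σB × Set Q)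
  Δ1B : Set (σB × α × Set σB)
  F1B : Set σB
  ba : α → σB

/-- the base order-1 transitions, lifted to the pool -/
def liftB {α σB Q : Type} (Δ : Set (σB × α × Set σB)) : Trans1 α σB Q :=
  {t | ∃ s a T, (s, a, T) ∈ Δ ∧ t = (Sum.inl s, a, Sum.inl '' T)}

/-- the (fixed) set of final order-1 states -/
def F1 {α P Q σB : Type} (su : Setup α P Q σB) : Set (GQ σB Q) :=
  Sum.inl '' su.F1B

/-- the data of stage `i` of the construction: the set `gdom` of identifiers present in
`A_i`, the recipes `G̃^i` (`recipes`), and the order-1 pool automaton `G^i` (`Δ1`) -/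
structure Stage (α σB Q : Type) where
  gdom : Set (Ident Q)
  recipes : Ident Q → Set (Set (Elem α σB Q))
  Δ1 : Trans1 α σB Q

/-- the order-2 transitions of `A_i`: the `B`-labelled transitions of `A_0` plus one
transition `q₁ —G^i_{(q₁,Q₂)}→ Q₂` for each identifier present -/
def Δ2At {α P Q σB : Type} (su : Setup α P Q σB) (i : ℕ) (dom : Set (Ident Q)) :
    Trans2 α σB Q :=
  {t | ∃ q s T, (q, s, T) ∈ su.Δ2B ∧ t = (q, Sum.inl s, T)} ∪
  {t | ∃ id ∈ dom, t = (id.1, Sum.inr (i, id), id.2)}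

/-- the clause of condition (2) for a single pair `(o, p^{k_t})` of a command with top
symbol `a` and source control state `p` -/
def Clause {α P Q σB : Type} (su : Setup α P Q σB) (i : ℕ) (st : Stage α σB Q)
    (a : α) (p : P) (op : Op2 α × P) (Qt : Set Q) (Selt : Set (Elem α σB Q)) : Prop :=
  match op.1 with
  | .push2 =>
      ∃ θ1 θ2 Q', lstep (Δ2At su i st.gdom) {su.qinit op.2} θ1 Q' ∧
        lstep (Δ2At su i st.gdom) Q' θ2 Qt ∧
        Selt = insert (Elem.ref (Sum.inl (su.ba a))) (Elem.ref '' θ1 ∪ Elem.ref '' θ2)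
  | .pop2 =>
      Selt = {Elem.ref (Sum.inl (su.ba a))} ∧
        (Qt = {su.qinit op.2} ∨ (su.qinit p ∈ su.nabla ∧ Qt = {su.qfeps}))
  | .pushw w =>
      ∃ θ T, (su.qinit op.2, θ, T) ∈ Δ2At su i st.gdom ∧ Qt = T ∧
        Selt = {Elem.push a w θ}

/-- condition (2): the element sets `S = S₁ ∪ … ∪ S_m` contributed to the identifier
`G̃^{i+1}_{(q,Qs)}` by the commands of the APDS, given the runs of `A_i` -/
def NewRec {α P Q σB : Type} (su : Setup α P Q σB) (i : ℕ) (st : Stage α σB Q)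
    (q : Q) (Qs : Set Q) : Set (Set (Elem α σB Q)) :=
  {S | ∃ p a OP, (p, a, OP) ∈ su.D ∧ q = su.qinit p ∧
        ∃ f : Op2 α × P → Set Q × Set (Elem α σB Q),
          (∀ op ∈ OP, Clause su i st a p op (f op).1 (f op).2) ∧
          Qs = ⋃ op ∈ OP, (f op).1 ∧ S = ⋃ op ∈ OP, (f op).2}

/-- the identifiers of `A_{i+1}`: those already present in `A_i` together with those
introduced by condition (2) -/
def NewDom {α P Q σB : Type} (su : Setup α P Q σB) (i : ℕ) (st : Stage α σB Q) :
    Set (Ident Q) :=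
  st.gdom ∪ {id | ∃ S, S ∈ NewRec su i st id.1 id.2}

/-- the requirement on an element `α_t` in the definition of `T_{G̃}`: for a reference
`θ`, a transition of `G^i`; for `(a, push_w, θ)`, the letter must be `a` and `G^i` must
have a run over `w` from `q^θ` -/
def ElemClause {α σB Q : Type} (Δ1 : Trans1 α σB Q) (b : α) :
    Elem α σB Q → Set (GQ σB Q) → Prop
  | .ref θ, T => (θ, b, T) ∈ Δ1
  | .push a w θ, T => b = a ∧ wrun Δ1 w {θ} T

/-- `T_{G̃^j}` : the update of the order-1 pool automaton.  The state `g^j_{(q₁,Q₂)}`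
inherits the transitions of `g^{j-1}_{(q₁,Q₂)}`, and receives a new transition
`g^j_{(q₁,Q₂)} —b→ Q₁ ∪ … ∪ Q_r` for every element set `S = {α₁,…,α_r}` of the recipe,
with the `Q_t` given by `ElemClause`; all previous transitions are kept. -/
def TG {α σB Q : Type} (j : ℕ) (dom : Set (Ident Q))
    (R : Ident Q → Set (Set (Elem α σB Q))) (Δ1 : Trans1 α σB Q) : Trans1 α σB Q :=
  Δ1 ∪
  {t | ∃ id ∈ dom, ∃ a T, (Sum.inr (j - 1, id), a, T) ∈ Δ1 ∧
        t = (Sum.inr (j, id), a, T)} ∪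
  {t | ∃ id ∈ dom, ∃ (b : α) (S : Set (Elem α σB Q)) (f : Elem α σB Q → Set (GQ σB Q)),
        S ∈ R id ∧ (∀ e ∈ S, ElemClause Δ1 b e (f e)) ∧
        t = (Sum.inr (j, id), b, ⋃ e ∈ S, f e)}

/-- `T_D` : one step of the saturation, producing the data of `A_{i+1}` from `A_i` -/
def TD {α P Q σB : Type} (su : Setup α P Q σB) (i : ℕ) (st : Stage α σB Q) :
    Stage α σB Q :=
  { gdom := NewDom su i st
    recipes := fun id => NewRec su i st id.1 id.2
    Δ1 := TG (i + 1) (NewDom su i st) (fun id => NewRec su i st id.1 id.2) st.Δ1 }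

/-- the sequence of stages: `A_0` (no identifiers, `G^0` the disjoint union of `B`),
then `A_{i+1} = T_D(A_i)` -/
def stage {α P Q σB : Type} (su : Setup α P Q σB) : ℕ → Stage α σB Q
  | 0 => ⟨∅, fun _ => ∅, liftB su.Δ1B⟩
  | i + 1 => TD su i (stage su i)

/-- acceptance of a 2-store from the order-2 state `q` in `A_i` -/
def Acc2 {α P Q σB : Type} (su : Setup α P Q σB) (i : ℕ) (q : Q) (s : Store2 α) : Prop :=
  ∃ S, run2 (stage su i).Δ1 (F1 su) (Δ2At su i (stage su i).gdom) (s.1 :: s.2) {q} S ∧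
    S ⊆ su.F2

/-- `L(A_i)` as a set of configurations (with `⟨p,∇⟩ ∈ L(A_i)` iff `q^p —∇→ {q^ε_f}`) -/
def LangA {α P Q σB : Type} (su : Setup α P Q σB) (i : ℕ) : Set (Conf P α) :=
  {c | (∃ s, c.2 = some s ∧ Acc2 su i (su.qinit c.1) s) ∨
       (c.2 = none ∧ su.qinit c.1 ∈ su.nabla)}

/-- well-formedness of `A_0`: `q^ε_f` is final with no outgoing transitions, the initial
states are pairwise distinct, non-final, with no incoming transitions; all 2-stores are
accepted from `q*_f`; and `B^a_1` (with initial state `ba a`) accepts exactly the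
1-stores with `top₁ = a` -/
def Setup.WF {α P Q σB : Type} (su : Setup α P Q σB) : Prop :=
  su.qfeps ∈ su.F2 ∧
  (∀ x T, (su.qfeps, x, T) ∉ su.Δ2B) ∧
  Function.Injective su.qinit ∧
  (∀ p, su.qinit p ∉ su.F2) ∧
  (∀ p, su.qinit p ≠ su.qfeps) ∧
  (∀ q x T p, (q, x, T) ∈ su.Δ2B → su.qinit p ∉ T) ∧
  (∀ s : Store2 α, Acc2 su 0 su.qfstar s) ∧
  (∀ (a : α) (w : Store1 α),
      Acc1 (liftB su.Δ1B) (F1 su) (Sum.inl (su.ba a)) w ↔ w.head? = some a)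

/-- the substitution `[j/i]` on pool states: replace the identifier superscript `i`
by `j` -/
def substGQ {σB Q : Type} (j i : ℕ) : GQ σB Q → GQ σB Q
  | .inl s => .inl s
  | .inr (i', id) => .inr (if i' = i then j else i', id)

/-- `[j/i]` on elements -/
def substElem {α σB Q : Type} (j i : ℕ) : Elem α σB Q → Elem α σB Q
  | .ref θ => .ref (substGQ j i θ)
  | .push a w θ => .push a w (substGQ j i θ)

/-- `[j/i]` on element sets -/
def substS {α σB Q : Type} (j i : ℕ) (S : Set (Elem α σB Q)) : Set (Elem α σB Q) :=
  substElem j i '' S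

/-- `G̃^i ≃ G̃^{i₁}` : the two stages have identifiers for exactly the same pairs, and
corresponding recipes agree up to the index substitution (`≲` in both directions) -/
def SimeqAt {α P Q σB : Type} (su : Setup α P Q σB) (i1 i : ℕ) : Prop :=
  (stage su i).gdom = (stage su i1).gdom ∧
  ∀ id ∈ (stage su i).gdom,
    (∀ S ∈ (stage su i).recipes id, substS (i1 - 1) (i - 1) S ∈ (stage su i1).recipes id) ∧
    (∀ S ∈ (stage su i1).recipes id, substS (i - 1) (i1 - 1) S ∈ (stage su i).recipes id)

/-- the fixed-state sequence `Ĝ^{i₁}, Ĝ^{i₁+1}, …` (indexed here by the offset from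
`i₁`): `Ĝ^{i₁} = G^{i₁}` and `Ĝ^{i+1} = T_{G̃^{i₁}[i₁/i₁-1]}(Ĝ^i)`, so that no new
states are added -/
def hatSeq {α P Q σB : Type} (su : Setup α P Q σB) (i1 : ℕ) : ℕ → Trans1 α σB Q
  | 0 => (stage su i1).Δ1
  | m + 1 =>
      TG i1 (stage su i1).gdom
        (fun id => substS i1 (i1 - 1) '' (stage su i1).recipes id)
        (hatSeq su i1 m)

end Order2

namespace Order2

section Helpers

variable {α P Q σB : Type}

lemma wstep_mono {Δ Δ' : Trans1 α σB Q} (h : Δ ⊆ Δ') {a : α} {S S' : Set (GQ σB Q)}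
    (hs : wstep Δ a S S') : wstep Δ' a S S' := by
  obtain ⟨f, hf, rfl⟩ := hs
  exact ⟨f, fun g hg => h (hf g hg), rfl⟩

lemma wrun_mono {Δ Δ' : Trans1 α σB Q} (h : Δ ⊆ Δ') {w : Store1 α}
    {S S' : Set (GQ σB Q)} (hr : wrun Δ w S S') : wrun Δ' w S S' := by
  induction hr with
  | nil S => exact .nil S
  | cons h1 _ ih => exact .cons (wstep_mono h h1) ih

lemma wstep_subset {Δ : Trans1 α σB Q} {a : α} {S S' T : Set (GQ σB Q)}
    (h : wstep Δ a S S') (hT : T ⊆ S) : ∃ T', wstep Δ a T T' ∧ T' ⊆ S' := by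
  obtain ⟨f, hf, rfl⟩ := h
  exact ⟨_, ⟨f, fun g hg => hf g (hT hg), rfl⟩, Set.biUnion_mono hT fun _ _ => le_rfl⟩

lemma wrun_subset {Δ : Trans1 α σB Q} {w : Store1 α} {S S' : Set (GQ σB Q)}
    (h : wrun Δ w S S') : ∀ {T}, T ⊆ S → ∃ T', wrun Δ w T T' ∧ T' ⊆ S' := by
  induction h with
  | nil S => exact fun hT => ⟨_, .nil _, hT⟩
  | cons h1 h2 ih =>
    intro T hT
    obtain ⟨T1, hs, hsub⟩ := wstep_subset h1 hT
    obtain ⟨T', hr, hsub'⟩ := ih hsub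
    exact ⟨T', .cons hs hr, hsub'⟩

lemma wrun_nil_inv {Δ : Trans1 α σB Q} {S S' : Set (GQ σB Q)}
    (h : wrun Δ [] S S') : S' = S := by cases h; rfl

lemma wstep_singleton' {Δ : Trans1 α σB Q} {a : α} {g : GQ σB Q} {T : Set (GQ σB Q)}
    (h : (g, a, T) ∈ Δ) : wstep Δ a {g} T := by
  refine ⟨fun _ => T, fun g' hg' => ?_, (Set.biUnion_singleton g fun _ => T).symm⟩
  rw [Set.mem_singleton_iff] at hg'; subst hg'; exact h

lemma acc1_cons_inv {Δ : Trans1 α σB Q} {F : Set (GQ σB Q)} {g : GQ σB Q} {a : α}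
    {w : Store1 α} (h : Acc1 Δ F g (a :: w)) :
    ∃ T E, (g, a, T) ∈ Δ ∧ wrun Δ w T E ∧ E ⊆ F := by
  obtain ⟨S, hr, hS⟩ := h
  cases hr with
  | cons h1 h2 =>
    obtain ⟨f, hf, rfl⟩ := h1
    refine ⟨f g, S, hf g rfl, ?_, hS⟩
    rwa [Set.biUnion_singleton] at h2

lemma wrun_append {Δ : Trans1 α σB Q} {u w : Store1 α} {S E : Set (GQ σB Q)}
    (h : wrun Δ (u ++ w) S E) : ∃ M, wrun Δ u S M ∧ wrun Δ w M E := by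
  induction u generalizing S with
  | nil => exact ⟨S, .nil S, h⟩
  | cons a u ih =>
    cases h with
    | cons h1 h2 =>
      obtain ⟨M, hu, hw⟩ := ih h2
      exact ⟨M, .cons h1 hu, hw⟩

lemma wrun_iUnion {Δ : Trans1 α σB Q} (w : Store1 α) :
    ∀ {ι : Type} (I : Set ι) (g E : ι → Set (GQ σB Q)),
      (∀ x ∈ I, wrun Δ w (g x) (E x)) →
      ∃ E', wrun Δ w (⋃ x ∈ I, g x) E' ∧ E' ⊆ ⋃ x ∈ I, E x := by
  induction w with
  | nil =>
    intro ι I g E h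
    exact ⟨_, .nil _, Set.iUnion₂_mono fun x hx => (wrun_nil_inv (h x hx)).symm.subset⟩
  | cons a w ih =>
    intro ι I g E h
    have h1 : ∀ x, ∃ fx : GQ σB Q → Set (GQ σB Q), x ∈ I →
        (∀ q ∈ g x, (q, a, fx q) ∈ Δ) ∧ wrun Δ w (⋃ q ∈ g x, fx q) (E x) := by
      intro x
      by_cases hx : x ∈ I
      · have hr := h x hx
        cases hr with
        | cons h1 h2 =>
          obtain ⟨f, hf, hS1⟩ := h1
          rw [hS1] at h2
          exact ⟨f, fun _ => ⟨hf, h2⟩⟩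
      · exact ⟨fun _ => ∅, fun hx' => absurd hx' hx⟩
    choose F hF using h1
    have h2 : ∀ q : GQ σB Q, ∃ y : Set (GQ σB Q) × Set (GQ σB Q),
        q ∈ (⋃ x ∈ I, g x) →
          (q, a, y.1) ∈ Δ ∧ wrun Δ w y.1 y.2 ∧ y.2 ⊆ ⋃ x ∈ I, E x := by
      intro q
      by_cases hq : q ∈ ⋃ x ∈ I, g x
      · rw [Set.mem_iUnion₂] at hq
        obtain ⟨x, hx, hqx⟩ := hq
        obtain ⟨hmem, hrun⟩ := hF x hx
        obtain ⟨T', hr', hsub'⟩ :=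
          wrun_subset hrun (Set.subset_biUnion_of_mem (u := fun q' => F x q') hqx)
        exact ⟨(F x q, T'), fun _ =>
          ⟨hmem q hqx, hr', hsub'.trans (Set.subset_biUnion_of_mem (u := E) hx)⟩⟩
      · exact ⟨(∅, ∅), fun hq' => absurd hq' hq⟩
    choose y hy using h2
    have hstep : wstep Δ a (⋃ x ∈ I, g x) (⋃ q ∈ (⋃ x ∈ I, g x), (y q).1) :=
      ⟨fun q => (y q).1, fun q hq => (hy q hq).1, rfl⟩
    obtain ⟨E', hr, hsub⟩ := ih (⋃ x ∈ I, g x) (fun q => (y q).1) (fun q => (y q).2)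
      (fun q hq => (hy q hq).2.1)
    exact ⟨E', .cons hstep hr, hsub.trans (Set.iUnion₂_subset fun q hq => (hy q hq).2.2)⟩

lemma run2_nil_inv {Δ1 : Trans1 α σB Q} {F' : Set (GQ σB Q)} {Δ2 : Trans2 α σB Q}
    {S S' : Set Q} (h : run2 Δ1 F' Δ2 [] S S') : S' = S := by cases h; rfl

lemma step2_subset {Δ1 : Trans1 α σB Q} {F' : Set (GQ σB Q)} {Δ2 : Trans2 α σB Q}
    {γ : Store1 α} {S S' T : Set Q} (h : step2 Δ1 F' Δ2 γ S S') (hT : T ⊆ S) :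
    ∃ T', step2 Δ1 F' Δ2 γ T T' ∧ T' ⊆ S' := by
  obtain ⟨f, hf, rfl⟩ := h
  exact ⟨_, ⟨f, fun q hq => hf q (hT hq), rfl⟩, Set.biUnion_mono hT fun _ _ => le_rfl⟩

lemma run2_subset {Δ1 : Trans1 α σB Q} {F' : Set (GQ σB Q)} {Δ2 : Trans2 α σB Q}
    {w : List (Store1 α)} {S S' : Set Q} (h : run2 Δ1 F' Δ2 w S S') :
    ∀ {T}, T ⊆ S → ∃ T', run2 Δ1 F' Δ2 w T T' ∧ T' ⊆ S' := by
  induction h with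
  | nil S => exact fun hT => ⟨_, .nil _, hT⟩
  | cons h1 h2 ih =>
    intro T hT
    obtain ⟨T1, hs, hsub⟩ := step2_subset h1 hT
    obtain ⟨T', hr, hsub'⟩ := ih hsub
    exact ⟨T', .cons hs hr, hsub'⟩

lemma run2_iUnion {Δ1 : Trans1 α σB Q} {F' : Set (GQ σB Q)} {Δ2 : Trans2 α σB Q}
    (w : List (Store1 α)) :
    ∀ {ι : Type} (I : Set ι) (g E : ι → Set Q),
      (∀ x ∈ I, run2 Δ1 F' Δ2 w (g x) (E x)) →
      ∃ E', run2 Δ1 F' Δ2 w (⋃ x ∈ I, g x) E' ∧ E' ⊆ ⋃ x ∈ I, E x := by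
  induction w with
  | nil =>
    intro ι I g E h
    exact ⟨_, .nil _, Set.iUnion₂_mono fun x hx => (run2_nil_inv (h x hx)).symm.subset⟩
  | cons γ w ih =>
    intro ι I g E h
    have h1 : ∀ x, ∃ fx : Q → GQ σB Q × Set Q, x ∈ I →
        (∀ q ∈ g x, (q, fx q) ∈ Δ2 ∧ Acc1 Δ1 F' (fx q).1 γ) ∧
        run2 Δ1 F' Δ2 w (⋃ q ∈ g x, (fx q).2) (E x) := by
      intro x
      by_cases hx : x ∈ I
      · have hr := h x hx
        cases hr with
        | cons h1 h2 =>
          obtain ⟨f, hf, hS1⟩ := h1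
          rw [hS1] at h2
          exact ⟨f, fun _ => ⟨hf, h2⟩⟩
      · exact ⟨fun q => (Sum.inr (0, (q, ∅)), ∅), fun hx' => absurd hx' hx⟩
    choose F hF using h1
    have h2 : ∀ q : Q, ∃ y : (GQ σB Q × Set Q) × Set Q, q ∈ (⋃ x ∈ I, g x) →
        ((q, y.1) ∈ Δ2 ∧ Acc1 Δ1 F' y.1.1 γ) ∧ run2 Δ1 F' Δ2 w y.1.2 y.2 ∧
          y.2 ⊆ ⋃ x ∈ I, E x := by
      intro q
      by_cases hq : q ∈ ⋃ x ∈ I, g x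
      · rw [Set.mem_iUnion₂] at hq
        obtain ⟨x, hx, hqx⟩ := hq
        obtain ⟨hmem, hrun⟩ := hF x hx
        obtain ⟨T', hr', hsub'⟩ :=
          run2_subset hrun (Set.subset_biUnion_of_mem (u := fun q' => (F x q').2) hqx)
        exact ⟨(F x q, T'), fun _ =>
          ⟨hmem q hqx, hr', hsub'.trans (Set.subset_biUnion_of_mem (u := E) hx)⟩⟩
      · exact ⟨((Sum.inr (0, (q, ∅)), ∅), ∅), fun hq' => absurd hq' hq⟩
    choose y hy using h2
    have hstep : step2 Δ1 F' Δ2 γ (⋃ x ∈ I, g x) (⋃ q ∈ (⋃ x ∈ I, g x), (y q).1.2) :=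
      ⟨fun q => (y q).1, fun q hq => (hy q hq).1, rfl⟩
    obtain ⟨E', hr, hsub⟩ := ih (⋃ x ∈ I, g x) (fun q => (y q).1.2) (fun q => (y q).2)
      (fun q hq => (hy q hq).2.1)
    exact ⟨E', .cons hstep hr, hsub.trans (Set.iUnion₂_subset fun q hq => (hy q hq).2.2)⟩

lemma stage_succ (su : Setup α P Q σB) (i : ℕ) :
    stage su (i + 1) = TD su i (stage su i) := rfl

lemma Δ1_mono_succ (su : Setup α P Q σB) (i : ℕ) :
    (stage su i).Δ1 ⊆ (stage su (i + 1)).Δ1 := by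
  rw [stage_succ]
  exact fun t ht => Set.mem_union_left _ (Set.mem_union_left _ ht)

lemma liftB_subset_stage (su : Setup α P Q σB) (i : ℕ) :
    liftB su.Δ1B ⊆ (stage su i).Δ1 := by
  induction i with
  | zero => exact subset_rfl
  | succ i ih => exact ih.trans (Δ1_mono_succ su i)

lemma inr_not_mem_F1 (su : Setup α P Q σB) (x : ℕ × Ident Q) :
    Sum.inr x ∉ F1 su := by
  rintro ⟨s, -, h⟩
  cases h

lemma gdom_succ_mem (su : Setup α P Q σB) {i : ℕ} {id : Ident Q}
    (h : id ∈ (stage su i).gdom) : id ∈ (stage su (i + 1)).gdom :=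
  Set.mem_union_left _ h

lemma acc1_shift (su : Setup α P Q σB) {i : ℕ} {id : Ident Q}
    (hid : id ∈ (stage su i).gdom) {γ' : Store1 α}
    (h : Acc1 (stage su i).Δ1 (F1 su) (Sum.inr (i, id)) γ') :
    Acc1 (stage su (i + 1)).Δ1 (F1 su) (Sum.inr (i + 1, id)) γ' := by
  cases γ' with
  | nil =>
    obtain ⟨S, hr, hS⟩ := h
    have : Sum.inr (i, id) ∈ S := by
      rw [wrun_nil_inv hr]; exact Set.mem_singleton _
    exact absurd (hS this) (inr_not_mem_F1 su _)
  | cons b v =>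
    obtain ⟨T, E, hmem, hcont, hE⟩ := acc1_cons_inv h
    have htr : (Sum.inr (i + 1, id), b, T) ∈ (stage su (i + 1)).Δ1 := by
      rw [stage_succ]
      refine Set.mem_union_left _ (Set.mem_union_right _ ?_)
      exact ⟨id, Set.mem_union_left _ hid, b, T, by rw [Nat.add_sub_cancel]; exact hmem, rfl⟩
    exact ⟨E, .cons (wstep_singleton' htr) (wrun_mono (Δ1_mono_succ su i) hcont), hE⟩

lemma trans2_lift (su : Setup α P Q σB) {i : ℕ} {q : Q} {θ : GQ σB Q} {T : Set Q}
    (hm : (q, θ, T) ∈ Δ2At su i (stage su i).gdom) {γ' : Store1 α}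
    (ha : Acc1 (stage su i).Δ1 (F1 su) θ γ') :
    ∃ θ', (q, θ', T) ∈ Δ2At su (i + 1) (stage su (i + 1)).gdom ∧
      Acc1 (stage su (i + 1)).Δ1 (F1 su) θ' γ' := by
  rcases hm with hm | hm
  · obtain ⟨q0, s, T0, hb, heq⟩ := hm
    refine ⟨θ, Set.mem_union_left _ ⟨q0, s, T0, hb, heq⟩, ?_⟩
    obtain ⟨S, hr, hS⟩ := ha
    exact ⟨S, wrun_mono (Δ1_mono_succ su i) hr, hS⟩
  · obtain ⟨id, hid, heq⟩ := hm
    rw [Prod.ext_iff] at heq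
    obtain ⟨h1, heq2⟩ := heq
    rw [Prod.ext_iff] at heq2
    obtain ⟨h2, h3⟩ := heq2
    dsimp at h1 h2 h3
    subst h1; subst h2; subst h3
    exact ⟨Sum.inr (i + 1, id),
      Set.mem_union_right _ ⟨id, gdom_succ_mem su hid, rfl⟩, acc1_shift su hid ha⟩

lemma step2_lift (su : Setup α P Q σB) {i : ℕ} {γ' : Store1 α} {S S' : Set Q}
    (h : step2 (stage su i).Δ1 (F1 su) (Δ2At su i (stage su i).gdom) γ' S S') :
    step2 (stage su (i + 1)).Δ1 (F1 su) (Δ2At su (i + 1) (stage su (i + 1)).gdom) γ' S S' := by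
  obtain ⟨f, hf, rfl⟩ := h
  have h1 : ∀ q, ∃ l : GQ σB Q, q ∈ S →
      (q, l, (f q).2) ∈ Δ2At su (i + 1) (stage su (i + 1)).gdom ∧
      Acc1 (stage su (i + 1)).Δ1 (F1 su) l γ' := by
    intro q
    by_cases hq : q ∈ S
    · obtain ⟨hm, ha⟩ := hf q hq
      obtain ⟨θ', hm', ha'⟩ := trans2_lift su hm ha
      exact ⟨θ', fun _ => ⟨hm', ha'⟩⟩
    · exact ⟨(f q).1, fun hq' => absurd hq' hq⟩
  choose l hl using h1
  exact ⟨fun q => (l q, (f q).2), fun q hq => ⟨(hl q hq).1, (hl q hq).2⟩, rfl⟩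

lemma run2_lift (su : Setup α P Q σB) {i : ℕ} {w : List (Store1 α)} {S S' : Set Q}
    (h : run2 (stage su i).Δ1 (F1 su) (Δ2At su i (stage su i).gdom) w S S') :
    run2 (stage su (i + 1)).Δ1 (F1 su) (Δ2At su (i + 1) (stage su (i + 1)).gdom) w S S' := by
  induction h with
  | nil S => exact .nil S
  | cons h1 _ ih => exact .cons (step2_lift su h1) ih

lemma langA_mono_succ (su : Setup α P Q σB) (i : ℕ) : LangA su i ⊆ LangA su (i + 1) := by
  rintro c (⟨s, hs, S, hr, hS⟩ | h)
  · exact Or.inl ⟨s, hs, S, run2_lift su hr, hS⟩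
  · exact Or.inr h

lemma acc1_head (su : Setup α P Q σB) (hwf : su.WF) (i : ℕ) (a : α) (w : Store1 α) :
    ∃ T E, (Sum.inl (su.ba a), a, T) ∈ (stage su i).Δ1 ∧
      wrun (stage su i).Δ1 w T E ∧ E ⊆ F1 su := by
  have h := (hwf.2.2.2.2.2.2.2 a (a :: w)).mpr rfl
  obtain ⟨S, hr, hS⟩ := h
  exact acc1_cons_inv ⟨S, wrun_mono (liftB_subset_stage su i) hr, hS⟩

lemma confstep_complete (su : Setup α P Q σB) (hwf : su.WF) {p : P} {γ : Store2 α}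
    {C : Set (Conf P α)} {i : ℕ} (h : ConfStep su.D (p, some γ) C)
    (hC : C ⊆ LangA su i) : (p, some γ) ∈ LangA su (i + 1) := by
  obtain ⟨p0, γ0, a, OP, heq, hD, htop, rfl⟩ := h
  rw [Prod.mk.injEq] at heq
  obtain ⟨rfl, heq2⟩ := heq
  obtain rfl : γ = γ0 := Option.some_injective _ heq2
  obtain ⟨γ1, γ2⟩ := γ
  cases γ1 with
  | nil => simp [top1] at htop
  | cons b w =>
  have hb : a = b := by simpa [top1] using htop.symm
  subst hb
  -- membership in `LangA su i` for defined successors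
  have hsuc : ∀ (o : Op2 α) (p' : P) (δ : Store2 α), (o, p') ∈ OP →
      Op2.apply o (a :: w, γ2) = some δ → Acc2 su i (su.qinit p') δ := by
    intro o p' δ hop happ
    have hmem := hC (Set.mem_union_left _ ⟨o, p', δ, hop, happ, rfl⟩)
    rcases hmem with ⟨s, hs, hacc⟩ | ⟨hn, -⟩
    · obtain rfl : δ = s := by simpa using hs
      exact hacc
    · simp at hn
  -- the per-command data
  have hgood : ∀ op : Op2 α × P, ∃ QS : Set Q × Set (Elem α σB Q), op ∈ OP →
      Clause su i (stage su i) a p op QS.1 QS.2 ∧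
      (∀ e ∈ QS.2, ∃ TE : Set (GQ σB Q) × Set (GQ σB Q),
          ElemClause (stage su i).Δ1 a e TE.1 ∧
          wrun (stage su i).Δ1 w TE.1 TE.2 ∧ TE.2 ⊆ F1 su) ∧
      ∃ E2, run2 (stage su i).Δ1 (F1 su) (Δ2At su i (stage su i).gdom) γ2 QS.1 E2 ∧
        E2 ⊆ su.F2 := by
    rintro ⟨o, p'⟩
    by_cases hop : (o, p') ∈ OP
    · cases o with
      | pushw u =>
        have hacc := hsuc (Op2.pushw u) p' (u ++ w, γ2) hop rfl
        obtain ⟨Sf, hr, hSf⟩ := hacc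
        cases hr with
        | cons h1 h2 =>
          obtain ⟨f0, hf0, hS1⟩ := h1
          rw [hS1, Set.biUnion_singleton] at h2
          obtain ⟨hmem, haccθ⟩ := hf0 (su.qinit p') (Set.mem_singleton _)
          obtain ⟨Sθ, hrθ, hSθ⟩ := haccθ
          obtain ⟨M, hu, hw'⟩ := wrun_append hrθ
          refine ⟨((f0 (su.qinit p')).2, {Elem.push a u (f0 (su.qinit p')).1}),
            fun _ => ⟨?_, ?_, ⟨Sf, h2, hSf⟩⟩⟩
          · exact ⟨(f0 (su.qinit p')).1, (f0 (su.qinit p')).2, hmem, rfl, rfl⟩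
          · intro e he
            rw [Set.mem_singleton_iff] at he
            subst he
            exact ⟨(M, Sθ), ⟨rfl, hu⟩, hw', hSθ⟩
      | push2 =>
        have hacc := hsuc Op2.push2 p' (a :: w, (a :: w) :: γ2) hop rfl
        obtain ⟨Sf, hr, hSf⟩ := hacc
        cases hr with
        | cons h1 h2 =>
        rename_i Qm
        cases h2 with
        | cons h2a h2b =>
        rename_i Qt
        obtain ⟨f1, hf1, hQ'⟩ := h1
        obtain ⟨f2, hf2, hQt⟩ := h2a
        refine ⟨(Qt, insert (Elem.ref (Sum.inl (su.ba a)))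
            (Elem.ref '' ((fun q => (f1 q).1) '' {su.qinit p'}) ∪
             Elem.ref '' ((fun q => (f2 q).1) '' Qm))),
          fun _ => ⟨?_, ?_, ⟨Sf, h2b, hSf⟩⟩⟩
        · exact ⟨_, _, Qm, ⟨f1, fun q hq => (hf1 q hq).1, rfl, hQ'⟩,
            ⟨f2, fun q hq => (hf2 q hq).1, rfl, hQt⟩, rfl⟩
        · intro e he
          rcases he with rfl | he
          · obtain ⟨T, E, hm, hr', hE⟩ := acc1_head su hwf i a w
            exact ⟨(T, E), hm, hr', hE⟩
          · rcases he with ⟨θ, hθ, rfl⟩ | ⟨θ, hθ, rfl⟩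
            · obtain ⟨q, hq, rfl⟩ := hθ
              obtain ⟨T, E, hm, hr', hE⟩ := acc1_cons_inv (hf1 q hq).2
              exact ⟨(T, E), hm, hr', hE⟩
            · obtain ⟨q, hq, rfl⟩ := hθ
              obtain ⟨T, E, hm, hr', hE⟩ := acc1_cons_inv (hf2 q hq).2
              exact ⟨(T, E), hm, hr', hE⟩
      | pop2 =>
        cases γ2 with
        | nil =>
          have hmem := hC (Set.mem_union_right _ ⟨⟨Op2.pop2, p', hop, rfl⟩, rfl⟩)
          rcases hmem with ⟨s, hs, -⟩ | ⟨-, hnab⟩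
          · simp at hs
          · refine ⟨({su.qfeps}, {Elem.ref (Sum.inl (su.ba a))}),
              fun _ => ⟨⟨rfl, Or.inr ⟨hnab, rfl⟩⟩, ?_,
                ⟨{su.qfeps}, .nil _, Set.singleton_subset_iff.mpr hwf.1⟩⟩⟩
            intro e he
            rw [Set.mem_singleton_iff] at he
            subst he
            obtain ⟨T, E, hm, hr', hE⟩ := acc1_head su hwf i a w
            exact ⟨(T, E), hm, hr', hE⟩
        | cons r rs =>
          have hacc := hsuc Op2.pop2 p' (r, rs) hop rfl
          obtain ⟨Sf, hr, hSf⟩ := hacc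
          refine ⟨({su.qinit p'}, {Elem.ref (Sum.inl (su.ba a))}),
            fun _ => ⟨⟨rfl, Or.inl rfl⟩, ?_, ⟨Sf, hr, hSf⟩⟩⟩
          intro e he
          rw [Set.mem_singleton_iff] at he
          subst he
          obtain ⟨T, E, hm, hr', hE⟩ := acc1_head su hwf i a w
          exact ⟨(T, E), hm, hr', hE⟩
    · exact ⟨(∅, ∅), fun h => absurd h hop⟩
  choose fQS hfQS using hgood
  -- the new identifier and recipe
  have hrec : (⋃ op ∈ OP, (fQS op).2) ∈
      NewRec su i (stage su i) (su.qinit p) (⋃ op ∈ OP, (fQS op).1) :=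
    ⟨p, a, OP, hD, rfl, fQS, fun op hop => (hfQS op hop).1, rfl, rfl⟩
  have hid : (su.qinit p, ⋃ op ∈ OP, (fQS op).1) ∈ NewDom su i (stage su i) :=
    Set.mem_union_right _ ⟨_, hrec⟩
  -- per-element data over the whole element set
  have helem : ∀ e : Elem α σB Q, ∃ TE : Set (GQ σB Q) × Set (GQ σB Q),
      e ∈ (⋃ op ∈ OP, (fQS op).2) →
        ElemClause (stage su i).Δ1 a e TE.1 ∧
        wrun (stage su i).Δ1 w TE.1 TE.2 ∧ TE.2 ⊆ F1 su := by
    intro e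
    by_cases he : e ∈ ⋃ op ∈ OP, (fQS op).2
    · rw [Set.mem_iUnion₂] at he
      obtain ⟨op, hop, hee⟩ := he
      obtain ⟨TE, h1, h2, h3⟩ := (hfQS op hop).2.1 e hee
      exact ⟨TE, fun _ => ⟨h1, h2, h3⟩⟩
    · exact ⟨(∅, ∅), fun h => absurd h he⟩
  choose fT hfT using helem
  -- the new order-1 transition of `G^{i+1}`
  have htrans : (Sum.inr (i + 1, (su.qinit p, ⋃ op ∈ OP, (fQS op).1)), a,
      ⋃ e ∈ (⋃ op ∈ OP, (fQS op).2), (fT e).1) ∈ (stage su (i + 1)).Δ1 := by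
    rw [stage_succ]
    refine Set.mem_union_right _ ?_
    exact ⟨(su.qinit p, ⋃ op ∈ OP, (fQS op).1), hid, a, ⋃ op ∈ OP, (fQS op).2,
      fun e => (fT e).1, hrec, fun e he => (hfT e he).1, rfl⟩
  -- the new label accepts `a :: w`
  obtain ⟨E1, hE1run, hE1sub⟩ := wrun_iUnion (Δ := (stage su i).Δ1) w
    (⋃ op ∈ OP, (fQS op).2) (fun e => (fT e).1) (fun e => (fT e).2)
    (fun e he => (hfT e he).2.1)
  have hacc1 : Acc1 (stage su (i + 1)).Δ1 (F1 su)
      (Sum.inr (i + 1, (su.qinit p, ⋃ op ∈ OP, (fQS op).1))) (a :: w) :=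
    ⟨E1, .cons (wstep_singleton' htrans) (wrun_mono (Δ1_mono_succ su i) hE1run),
      hE1sub.trans (Set.iUnion₂_subset fun e he => (hfT e he).2.2)⟩
  -- the new order-2 transition of `A_{i+1}`
  have hd2 : (su.qinit p, Sum.inr (i + 1, (su.qinit p, ⋃ op ∈ OP, (fQS op).1)),
      ⋃ op ∈ OP, (fQS op).1) ∈ Δ2At su (i + 1) (stage su (i + 1)).gdom :=
    Set.mem_union_right _ ⟨(su.qinit p, ⋃ op ∈ OP, (fQS op).1), hid, rfl⟩
  have hstep2 : step2 (stage su (i + 1)).Δ1 (F1 su)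
      (Δ2At su (i + 1) (stage su (i + 1)).gdom) (a :: w) {su.qinit p}
      (⋃ op ∈ OP, (fQS op).1) := by
    refine ⟨fun _ => (Sum.inr (i + 1, (su.qinit p, ⋃ op ∈ OP, (fQS op).1)),
      ⋃ op ∈ OP, (fQS op).1), fun q hq => ?_, by rw [Set.biUnion_singleton]⟩
    rw [Set.mem_singleton_iff] at hq
    subst hq
    exact ⟨hd2, hacc1⟩
  -- the run over the remaining 1-stores
  have h3 : ∀ op : Op2 α × P, ∃ E2 : Set Q, op ∈ OP →
      run2 (stage su i).Δ1 (F1 su) (Δ2At su i (stage su i).gdom) γ2 (fQS op).1 E2 ∧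
        E2 ⊆ su.F2 := by
    intro op
    by_cases hop : op ∈ OP
    · obtain ⟨E2, h1, h2⟩ := (hfQS op hop).2.2
      exact ⟨E2, fun _ => ⟨h1, h2⟩⟩
    · exact ⟨∅, fun h => absurd h hop⟩
  choose fE2 hfE2 using h3
  obtain ⟨E2, hE2run, hE2sub⟩ := run2_iUnion γ2 OP (fun op => (fQS op).1) fE2
    (fun op hop => (hfE2 op hop).1)
  refine Or.inl ⟨(a :: w, γ2), rfl, E2, .cons hstep2 (run2_lift su hE2run), ?_⟩
  exact hE2sub.trans (Set.iUnion₂_subset fun op hop => (hfE2 op hop).2)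

lemma langA_mono (su : Setup α P Q σB) {i j : ℕ} (h : i ≤ j) :
    LangA su i ⊆ LangA su j := by
  induction h with
  | refl => exact subset_rfl
  | step _ ih => exact ih.trans (langA_mono_succ su _)

end Helpers

/-- Completeness of the saturation sequence.  Fix an order-2 APDS and a
2-store multi-automaton `A_0` with `L(A_0) = C_Init`, satisfying the well-formedness
assumptions, and let `A_0, A_1, …` be the saturation sequence `A_{i+1} = T_D(A_i)`.
For every configuration `⟨p, γ⟩ ∈ Pre*(C_Init)` there exists some `i` such that
`γ ∈ L(A_i^{q^p})`. -/
theorem saturation_complete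
    (α P Q σB : Type) [Finite α] [Finite P] [Finite Q] [Finite σB]
    (su : Setup α P Q σB) (hwf : su.WF)
    (hDfin : su.D.Finite) (hOPfin : ∀ x ∈ su.D, x.2.2.Finite)
    (c : Conf P α) (hc : c ∈ PreStar su.D (LangA su 0)) :
    ∃ i, c ∈ LangA su i := by
  obtain ⟨C, hsteps, hsub⟩ := hc
  have key : ∀ (X : Set (Conf P α)), Relation.ReflTransGen (SetStep su.D) X C →
      ∃ i, X ⊆ LangA su i := by
    intro X hX
    induction hX using Relation.ReflTransGen.head_induction_on with
    | refl => exact ⟨0, hsub⟩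
    | head hstep _ ih =>
      obtain ⟨i, hY⟩ := ih
      obtain ⟨c0, C0, C', hconf, hnot, rfl, rfl⟩ := hstep
      obtain ⟨p0, γ0, rfl⟩ : ∃ p0 γ0, c0 = (p0, some γ0) := by
        obtain ⟨p0, γ0, _, _, h, -⟩ := hconf
        exact ⟨p0, γ0, h⟩
      have hc0 : (p0, some γ0) ∈ LangA su (i + 1) :=
        confstep_complete su hwf hconf (fun x hx => hY (Set.mem_union_right _ hx))
      refine ⟨i + 1, ?_⟩
      rw [Set.insert_subset_iff]
      exact ⟨hc0, fun x hx => langA_mono_succ su i (hY (Set.mem_union_left _ hx))⟩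
  obtain ⟨i, hX⟩ := key {c} hsteps
  exact ⟨i, hX (Set.mem_singleton c)⟩

end Order2
end

section
/- Order-2 fixed point: there exists i_1 > 0 such that G̃^i ≃ G̃^{i_1} for all i ≥ i_1; that is, from index i_1 onwards the order-2 transition structure of the automata A_i is constant and the identifier sets labelling corresponding transitions are equal up to the index substitution. -/
namespace Order2

/-- transporting an order-2 transition along the index substitution on labels -/
lemma Δ2At_subst {α P Q σB : Type} (su : Setup α P Q σB) {i : ℕ} (j : ℕ)
    {dom : Set (Ident Q)} {q : Q} {g : GQ σB Q} {T : Set Q}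
    (h : (q, g, T) ∈ Δ2At su i dom) : (q, substGQ j i g, T) ∈ Δ2At su j dom := by
  rcases h with ⟨q', s, T', hm, heq⟩ | ⟨id, hid, heq⟩
  · obtain ⟨rfl, rfl, rfl⟩ : q = q' ∧ g = Sum.inl s ∧ T = T' := by
      simpa [Prod.ext_iff] using heq
    exact Or.inl ⟨_, _, _, hm, rfl⟩
  · obtain ⟨rfl, rfl, rfl⟩ : q = id.1 ∧ g = Sum.inr (i, id) ∧ T = id.2 := by
      simpa [Prod.ext_iff] using heq
    exact Or.inr ⟨id, hid, by simp [substGQ]⟩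

lemma lstep_subst {α P Q σB : Type} (su : Setup α P Q σB) {i : ℕ} (j : ℕ)
    {dom : Set (Ident Q)} {S : Set Q} {θ : Set (GQ σB Q)} {S' : Set Q}
    (h : lstep (Δ2At su i dom) S θ S') :
    lstep (Δ2At su j dom) S (substGQ j i '' θ) S' := by
  obtain ⟨f, hf, hθ, hS'⟩ := h
  refine ⟨fun q => (substGQ j i (f q).1, (f q).2),
    fun q hq => Δ2At_subst su j (hf q hq), ?_, hS'⟩
  subst hθ
  rw [Set.image_image]

lemma Clause_subst {α P Q σB : Type} (su : Setup α P Q σB) {i : ℕ} (j : ℕ)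
    {st st' : Stage α σB Q} (hdom : st.gdom = st'.gdom)
    {a : α} {p : P} {op : Op2 α × P} {Qt : Set Q} {Selt : Set (Elem α σB Q)}
    (h : Clause su i st a p op Qt Selt) :
    Clause su j st' a p op Qt (substS j i Selt) := by
  obtain ⟨o, p'⟩ := op
  cases o with
  | push2 =>
      obtain ⟨θ1, θ2, Q', h1, h2, hS⟩ := h
      refine ⟨substGQ j i '' θ1, substGQ j i '' θ2, Q',
        hdom ▸ lstep_subst su j h1, hdom ▸ lstep_subst su j h2, ?_⟩
      subst hS
      simp only [substS, Set.image_insert_eq, Set.image_union, Set.image_image]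
      rfl
  | pop2 =>
      obtain ⟨hS, hQ⟩ := h
      refine ⟨?_, hQ⟩
      subst hS
      simp only [substS, Set.image_singleton]
      rfl
  | pushw w =>
      obtain ⟨θ, T, hmem, hQ, hS⟩ := h
      refine ⟨substGQ j i θ, T, hdom ▸ Δ2At_subst su j hmem, hQ, ?_⟩
      subst hS
      simp only [substS, Set.image_singleton]
      rfl

lemma NewRec_subst {α P Q σB : Type} (su : Setup α P Q σB) {i : ℕ} (j : ℕ)
    {st st' : Stage α σB Q} (hdom : st.gdom = st'.gdom)
    {q : Q} {Qs : Set Q} {S : Set (Elem α σB Q)}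
    (h : S ∈ NewRec su i st q Qs) : substS j i S ∈ NewRec su j st' q Qs := by
  obtain ⟨p, a, OP, hD, hq, f, hf, hQ, hS⟩ := h
  refine ⟨p, a, OP, hD, hq, fun op => ((f op).1, substS j i (f op).2),
    fun op hop => Clause_subst su j hdom (hf op hop), hQ, ?_⟩
  subst hS
  simp only [substS, Set.image_iUnion]

lemma gdom_mono {α P Q σB : Type} (su : Setup α P Q σB) {i j : ℕ} (h : i ≤ j) :
    (stage su i).gdom ⊆ (stage su j).gdom := by
  induction j, h using Nat.le_induction with
  | base => exact subset_rfl
  | succ k hk ih =>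
      refine ih.trans ?_
      intro x hx
      exact Or.inl hx

lemma gdom_stab {α P Q σB : Type} [Finite Q] (su : Setup α P Q σB) :
    ∃ N : ℕ, ∀ i, N ≤ i → (stage su i).gdom = (stage su N).gdom := by
  have hfin : (Set.range fun i => (stage su i).gdom).Finite := Set.toFinite _
  obtain ⟨g, hg, hmax⟩ := hfin.exists_maximal ⟨_, ⟨0, rfl⟩⟩
  obtain ⟨N, rfl⟩ := hg
  refine ⟨N, fun i hi => ?_⟩
  exact le_antisymm (hmax ⟨i, rfl⟩ (gdom_mono su hi)) (gdom_mono su hi)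

/-- Order-2 fixed point.  Fix an order-2 APDS and a well-formed 2-store
multi-automaton `A_0`, with the saturation sequence `A_{i+1} = T_D(A_i)` and the
associated identifier sets `G̃^i`.  There exists `i₁ > 0` such that `G̃^i ≃ G̃^{i₁}` for
all `i ≥ i₁`: from index `i₁` onwards the order-2 transition structure of the `A_i` is
constant, and the identifier sets labelling corresponding transitions are equal up to the
index substitution. -/
theorem order2_fixed_point
    (α P Q σB : Type) [Finite α] [Finite P] [Finite Q] [Finite σB]
    (su : Setup α P Q σB) (hwf : su.WF)
    (hDfin : su.D.Finite) (hOPfin : ∀ x ∈ su.D, x.2.2.Finite) :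
    ∃ i1 : ℕ, 0 < i1 ∧ ∀ i, i1 ≤ i → SimeqAt su i1 i := by
  obtain ⟨N, hN⟩ := gdom_stab su
  refine ⟨N + 1, Nat.succ_pos N, fun i hi => ?_⟩
  obtain ⟨k, rfl⟩ : ∃ k, i = k + 1 := ⟨i - 1, by omega⟩
  have hkN : N ≤ k := by omega
  have hd : (stage su k).gdom = (stage su N).gdom := hN k hkN
  constructor
  · rw [hN (k + 1) (by omega), hN (N + 1) (by omega)]
  · intro id _
    constructor
    · intro S hS
      have h2 : substS N k S ∈ NewRec su N (stage su N) id.1 id.2 :=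
        NewRec_subst su N hd hS
      exact h2
    · intro S hS
      have h2 : substS k N S ∈ NewRec su k (stage su k) id.1 id.2 :=
        NewRec_subst su k hd.symm hS
      exact h2

end Order2
end
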